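/- Fix τ ∈ (0,1), a symmetric positive definite P ∈ ℝ^{n×n}, and c > 0. Then there exists a unique λ > (1−τ)‖P‖ such that Σᵢ₌₁ⁿ γ(λ, dᵢ) = c, where d₁ ≥ ⋯ ≥ dₙ > 0 are the eigenvalues of P and γ(λ, d) = (1/(τ(τ−1)))(1 − ((1−τ)/λ)d)^{τ/(τ−1)} + (1/(1−τ))(1 − ((1−τ)/λ)d)^{1/(τ−1)} + 1/τ. -/

import Mathlib

open Matrix

noncomputable def matFun {n : ℕ} (A : Matrix (Fin n) (Fin n) ℝ) (f : ℝ → ℝ) :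
    Matrix (Fin n) (Fin n) ℝ :=
  if h : A.IsHermitian then
    (h.eigenvectorUnitary : Matrix (Fin n) (Fin n) ℝ) *
      Matrix.diagonal (fun i => f (h.eigenvalues i)) *
      star (h.eigenvectorUnitary : Matrix (Fin n) (Fin n) ℝ)
  else 0

noncomputable def specNorm {n : ℕ} (A : Matrix (Fin n) (Fin n) ℝ) : ℝ :=
  if h : A.IsHermitian then ⨆ i, h.eigenvalues i else 0

open Filter Set Topology

set_option maxHeartbeats 1000000 in
/-- Existence and uniqueness of the Lagrange multiplier: for `τ ∈ (0,1)`,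
`P` symmetric positive definite and `c > 0`, there is a unique
`λ > (1−τ)‖P‖` with `∑ᵢ γ(λ, dᵢ) = c`, where `dᵢ` are the eigenvalues of `P`. -/
theorem lagrange_multiplier_exists_unique {n : ℕ} (hn : 0 < n)
    (P : Matrix (Fin n) (Fin n) ℝ) (hP : P.PosDef) (τ c : ℝ)
    (hτ0 : 0 < τ) (hτ1 : τ < 1) (hc : 0 < c) :
    ∃! lam : ℝ, (1 - τ) * specNorm P < lam ∧
      ∑ i : Fin n,
        ((1 / (τ * (τ - 1))) * (1 - ((1 - τ) / lam) * hP.1.eigenvalues i) ^ (τ / (τ - 1)) +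
         (1 / (1 - τ)) * (1 - ((1 - τ) / lam) * hP.1.eigenvalues i) ^ (1 / (τ - 1)) + 1 / τ)
        = c := by
  classical
  haveI : Nonempty (Fin n) := ⟨⟨0, hn⟩⟩
  have hτ1' : (0:ℝ) < 1 - τ := by linarith
  have hτm : τ - 1 < 0 := by linarith
  set d : Fin n → ℝ := hP.1.eigenvalues with hd
  have hd_pos : ∀ i, 0 < d i := fun i => hP.eigenvalues_pos i
  obtain ⟨i₀, hi₀⟩ := Finite.exists_max d
  have hspec : specNorm P = d i₀ := by
    rw [specNorm, dif_pos hP.1]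
    exact le_antisymm (ciSup_le hi₀) (le_ciSup (Set.Finite.bddAbove (Set.finite_range d)) i₀)
  set a : ℝ := (1 - τ) * specNorm P with ha
  have ha_pos : 0 < a := mul_pos hτ1' (hspec ▸ hd_pos i₀)
  -- the one-variable function g
  set p : ℝ := τ / (τ - 1) with hp
  set q : ℝ := 1 / (τ - 1) with hq
  set g : ℝ → ℝ := fun x => (1 / (τ * (τ - 1))) * x ^ p + (1 / (1 - τ)) * x ^ q + 1 / τ
    with hg
  have hq_neg : q < 0 := div_neg_of_pos_of_neg one_pos hτm
  have hg_one : g 1 = 0 := by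
    simp only [hg, Real.one_rpow, mul_one]
    field_simp [hτ0.ne', hτm.ne]
    ring
  -- continuity of g at positive points
  have hg_contAt : ∀ x : ℝ, x ≠ 0 → ContinuousAt g x := by
    intro x hx
    apply ContinuousAt.add
    apply ContinuousAt.add
    · exact continuousAt_const.mul (Real.continuousAt_rpow_const x p (Or.inl hx))
    · exact continuousAt_const.mul (Real.continuousAt_rpow_const x q (Or.inl hx))
    · exact continuousAt_const
  -- derivative of g
  have hg_deriv : ∀ x ∈ Set.Ioo (0:ℝ) 1, HasDerivAt g
      ((1 / (τ * (τ - 1))) * (p * x ^ (p - 1)) + (1 / (1 - τ)) * (q * x ^ (q - 1))) x := by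
    intro x hx
    exact (((Real.hasDerivAt_rpow_const (Or.inl hx.1.ne')).const_mul _).add
      ((Real.hasDerivAt_rpow_const (Or.inl hx.1.ne')).const_mul _)).add_const _
  have hg_anti : StrictAntiOn g (Set.Ioc 0 1) := by
    apply strictAntiOn_of_deriv_neg (convex_Ioc 0 1)
    · exact fun x hx => (hg_contAt x (ne_of_gt hx.1)).continuousWithinAt
    · intro x hx
      rw [interior_Ioc] at hx
      rw [(hg_deriv x hx).deriv]
      have hpq : p - 1 = q := by
        rw [hp, hq]; field_simp [hτm.ne]; ring
      have hxq : (0:ℝ) < x ^ q := Real.rpow_pos_of_pos hx.1 q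
      have hxq1 : x ^ (q - 1) = x ^ q / x := by
        rw [Real.rpow_sub hx.1, Real.rpow_one]
      have hkey : x ^ q < x ^ (q - 1) := by
        rw [hxq1]
        rw [lt_div_iff₀ hx.1]
        nlinarith [hx.2]
      have hc1 : (1 / (τ * (τ - 1))) * p = 1 / (τ - 1)^2 := by
        rw [hp]; field_simp [hτ0.ne', hτm.ne]
      have hc2 : (1 / (1 - τ)) * q = -(1 / (τ - 1)^2) := by
        rw [hq]; field_simp [hτ1'.ne', hτm.ne]; ring
      have hk : (0:ℝ) < 1 / (τ - 1)^2 := div_pos one_pos (by nlinarith)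
      calc (1 / (τ * (τ - 1))) * (p * x ^ (p - 1)) + (1 / (1 - τ)) * (q * x ^ (q - 1))
          = (1 / (τ - 1)^2) * x ^ q - (1 / (τ - 1)^2) * x ^ (q - 1) := by
            rw [hpq]; nlinarith [hc1, hc2]
        _ < 0 := by nlinarith [hkey, hk]
  have hg_pos : ∀ x ∈ Set.Ioo (0:ℝ) 1, 0 < g x := by
    intro x hx
    have := hg_anti ⟨hx.1, hx.2.le⟩ ⟨one_pos, le_refl 1⟩ hx.2
    rwa [hg_one] at this
  -- g blows up at 0⁺
  have hg_top : Filter.Tendsto g (nhdsWithin 0 (Set.Ioi 0)) Filter.atTop := by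
    have hpow : Filter.Tendsto (fun x : ℝ => x ^ q) (nhdsWithin 0 (Set.Ioi 0)) Filter.atTop := by
      have h1 : Filter.Tendsto (fun x : ℝ => x ^ (-q)) (nhdsWithin 0 (Set.Ioi 0))
          (nhdsWithin 0 (Set.Ioi 0)) := by
        apply tendsto_nhdsWithin_of_tendsto_nhds_of_eventually_within
        · have := (Real.continuousAt_rpow_const 0 (-q) (Or.inr (by linarith))).tendsto
          simpa [Real.zero_rpow (by linarith : -q ≠ 0)] using this.mono_left nhdsWithin_le_nhds
        · filter_upwards [self_mem_nhdsWithin] with x hx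
          exact Real.rpow_pos_of_pos hx (-q)
      have h2 := h1.inv_tendsto_nhdsGT_zero
      apply h2.congr'
      filter_upwards [self_mem_nhdsWithin] with x (hx : (0:ℝ) < x)
      simp [Real.rpow_neg hx.le]
    have hmul : Filter.Tendsto (fun x : ℝ => x ^ q * ((1 / (τ * (τ - 1))) * x + 1 / (1 - τ)))
        (nhdsWithin 0 (Set.Ioi 0)) Filter.atTop := by
      apply Filter.Tendsto.atTop_mul_pos (by positivity : (0:ℝ) < 1 / (1 - τ)) hpow
      have hcont : Continuous (fun x : ℝ => (1 / (τ * (τ - 1))) * x + 1 / (1 - τ)) :=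
        (continuous_const.mul continuous_id).add continuous_const
      have : Filter.Tendsto (fun x : ℝ => (1 / (τ * (τ - 1))) * x + 1 / (1 - τ))
          (nhds 0) (nhds (1 / (1 - τ))) := by
        simpa using hcont.tendsto 0
      exact this.mono_left nhdsWithin_le_nhds
    have := tendsto_atTop_add_const_right _ (1/τ) hmul
    apply this.congr'
    filter_upwards [self_mem_nhdsWithin] with x (hx : (0:ℝ) < x)
    have hpq : p = q + 1 := by rw [hp, hq]; field_simp [hτm.ne]; ring
    simp only [hg, hpq, Real.rpow_add hx, Real.rpow_one]
    ring
  -- the function F of lam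
  set F : ℝ → ℝ := fun lam => ∑ i : Fin n, g (1 - ((1 - τ) / lam) * d i) with hF
  -- basic facts about x_i(lam)
  have hx_mem : ∀ lam, a < lam → ∀ i, (1 - ((1 - τ) / lam) * d i) ∈ Set.Ioo (0:ℝ) 1 := by
    intro lam hlam i
    have hlam_pos : 0 < lam := ha_pos.trans hlam
    have hdi : (1 - τ) * d i ≤ a := by
      rw [ha, hspec]
      exact mul_le_mul_of_nonneg_left (hi₀ i) hτ1'.le
    constructor
    · have : ((1 - τ) / lam) * d i < 1 := by
        rw [div_mul_eq_mul_div, div_lt_one hlam_pos]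
        calc (1 - τ) * d i ≤ a := hdi
          _ < lam := hlam
      linarith
    · have : 0 < ((1 - τ) / lam) * d i :=
        mul_pos (div_pos hτ1' hlam_pos) (hd_pos i)
      linarith
  have hx_mono : ∀ i (lam₁ lam₂ : ℝ), a < lam₁ → lam₁ < lam₂ →
      (1 - ((1 - τ) / lam₁) * d i) < (1 - ((1 - τ) / lam₂) * d i) := by
    intro i lam₁ lam₂ h1 h12
    have h1p : 0 < lam₁ := ha_pos.trans h1
    have : (1 - τ) / lam₂ < (1 - τ) / lam₁ := by
      apply div_lt_div_of_pos_left hτ1' h1p h12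
    nlinarith [hd_pos i]
  have hF_anti : StrictAntiOn F (Set.Ioi a) := by
    intro lam₁ h1 lam₂ h2 h12
    apply Finset.sum_lt_sum_of_nonempty Finset.univ_nonempty
    intro i _
    exact hg_anti (Set.Ioo_subset_Ioc_self (hx_mem lam₁ h1 i))
      (Set.Ioo_subset_Ioc_self (hx_mem lam₂ h2 i)) (hx_mono i lam₁ lam₂ h1 h12)
  -- continuity of F on Ioi a
  have hF_contAt : ∀ lam, a < lam → ContinuousAt F lam := by
    intro lam hlam
    have hlam_pos : 0 < lam := ha_pos.trans hlam
    apply tendsto_finset_sum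
    intro i _
    have hx : ContinuousAt (fun lam : ℝ => 1 - ((1 - τ) / lam) * d i) lam := by
      fun_prop (disch := exact hlam_pos.ne')
    exact ContinuousAt.comp (f := fun lam : ℝ => 1 - ((1 - τ) / lam) * d i)
      (hg_contAt _ (hx_mem lam hlam i).1.ne') hx
  -- find lam₀ with F lam₀ > c
  have hx₀ : ∃ x₀ : ℝ, x₀ ∈ Set.Ioo (0:ℝ) 1 ∧ c < g x₀ := by
    have h1 : ∀ᶠ x in nhdsWithin 0 (Set.Ioi (0:ℝ)), c < g x := hg_top.eventually_gt_atTop c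
    have h2 : Set.Ioo (0:ℝ) 1 ∈ nhdsWithin 0 (Set.Ioi (0:ℝ)) :=
      Ioo_mem_nhdsGT_of_mem ⟨le_refl 0, one_pos⟩
    obtain ⟨x₀, hx₀, hx₀'⟩ := (h1.and (eventually_of_mem h2 (fun x hx => hx))).exists
    exact ⟨x₀, hx₀', hx₀⟩
  obtain ⟨x₀, hx₀mem, hx₀c⟩ := hx₀
  set lam₀ : ℝ := a / (1 - x₀) with hlam₀
  have h1x₀ : 0 < 1 - x₀ := by linarith [hx₀mem.2]
  have hlam₀a : a < lam₀ := by
    rw [hlam₀, lt_div_iff₀ h1x₀]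
    exact mul_lt_of_lt_one_right ha_pos (by linarith [hx₀mem.1])
  have hlam₀x : 1 - ((1 - τ) / lam₀) * d i₀ = x₀ := by
    have : ((1 - τ) / lam₀) * d i₀ = a / lam₀ := by
      rw [ha, hspec]; ring
    have h2 : a / lam₀ = 1 - x₀ := by
      rw [hlam₀]
      field_simp [ha_pos.ne']
    rw [this, h2]
    ring
  have hFlam₀ : c < F lam₀ := by
    have hle : g x₀ ≤ F lam₀ := by
      calc g x₀ = g (1 - ((1 - τ) / lam₀) * d i₀) := by rw [hlam₀x]
        _ ≤ ∑ i : Fin n, g (1 - ((1 - τ) / lam₀) * d i) :=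
          Finset.single_le_sum
            (fun i _ => (hg_pos _ (hx_mem lam₀ hlam₀a i)).le) (Finset.mem_univ i₀)
    exact lt_of_lt_of_le hx₀c hle
  -- F tends to 0 at infinity
  have hFtop : Filter.Tendsto F Filter.atTop (nhds 0) := by
    have h0 : Filter.Tendsto F Filter.atTop (nhds (∑ _i : Fin n, g 1)) := by
      apply tendsto_finset_sum
      intro i _
      have hxi : Filter.Tendsto (fun lam : ℝ => 1 - ((1 - τ) / lam) * d i)
          Filter.atTop (nhds 1) := by
        have h1 : Filter.Tendsto (fun lam : ℝ => ((1 - τ) / lam) * d i)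
            Filter.atTop (nhds 0) := by
          have h2 := ((tendsto_inv_atTop_zero (𝕜 := ℝ)).const_mul (1 - τ)).mul_const (d i)
          simpa [div_eq_mul_inv] using h2
        have h3 := (tendsto_const_nhds (α := ℝ) (x := (1:ℝ)) (f := Filter.atTop)).sub h1
        simpa using h3
      exact ((hg_contAt 1 one_ne_zero).tendsto).comp hxi
    simpa [hg_one] using h0
  obtain ⟨lam₁, hlam₁c, hlam₀₁⟩ :=
    ((hFtop.eventually_lt_const hc).and (Filter.eventually_gt_atTop lam₀)).exists
  have hcont : ContinuousOn F (Set.Icc lam₀ lam₁) := fun x hx =>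
    (hF_contAt x (lt_of_lt_of_le hlam₀a hx.1)).continuousWithinAt
  obtain ⟨lam, hlam_mem, hFlam⟩ :=
    intermediate_value_Icc' hlam₀₁.le hcont ⟨hlam₁c.le, hFlam₀.le⟩
  have hlam_gt : a < lam := lt_of_lt_of_le hlam₀a hlam_mem.1
  show ∃! lam : ℝ, a < lam ∧ F lam = c
  refine ⟨lam, ⟨hlam_gt, hFlam⟩, ?_⟩
  rintro y ⟨hy1, hy2⟩
  exact hF_anti.injOn hy1 hlam_gt (hy2.trans hFlam.symm)
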